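/- Let P be a switching-closed full subquiver of Q̃^{(d,n)}: whenever A → A+E_i → A+E_i+E_j is a path in P and A+E_j is a vertex of Q̃^{(d,n)}, the path A → A+E_j → A+E_i+E_j also lies in P. If there is a directed path from A to B in P, then every directed path from A to B in Q̃^{(d,n)} lies entirely in P. -/

import Mathlib

/-- `Dset m d A`: the set Ď(m,d) of (d+1)-tuples of integers with consecutive
gaps ≥ 2, cyclically (a_d + 2 ≤ a_0 + m). -/
def Dset (m d : ℕ) (A : Fin (d+1) → ℤ) : Prop :=
  (∀ i : Fin d, A i.castSucc + 2 ≤ A i.succ) ∧ A (Fin.last d) + 2 ≤ A 0 + (m : ℤ)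

/-- i-th standard basis vector of ℤ^{d+1}. -/
def Evec (d : ℕ) (i : Fin (d+1)) : Fin (d+1) → ℤ := fun j => if j = i then 1 else 0

/-- Arrows of the quiver Q̃^{(d,n)} (with m = n + 2d + 1): A → A + E_i whenever
both endpoints are vertices. -/
def TArrow (m d : ℕ) (A B : Fin (d+1) → ℤ) : Prop :=
  Dset m d A ∧ Dset m d B ∧ ∃ i : Fin (d+1), B = A + Evec d i

/-- A full subquiver (given by its vertex set P) of Q̃^{(d,n)} is switching-closed:
whenever A → A+E_i → A+E_i+E_j lies in P and A+E_j is a vertex of Q̃^{(d,n)},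
the path A → A+E_j → A+E_i+E_j also lies in P. -/
def SwitchClosed (m d : ℕ) (P : Set (Fin (d+1) → ℤ)) : Prop :=
  ∀ (A : Fin (d+1) → ℤ) (i j : Fin (d+1)),
    A ∈ P → A + Evec d i ∈ P → A + Evec d i + Evec d j ∈ P →
    Dset m d (A + Evec d j) → A + Evec d j ∈ P

lemma evec_self {d : ℕ} (i : Fin (d+1)) : Evec d i i = 1 := by simp [Evec]

/-- Auxiliary arithmetic fact about one "gap" condition. -/
lemma gap_aux {d : ℕ} {A : Fin (d+1) → ℤ} {i j a b : Fin (d+1)}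
    (hij : i ≠ j) (hab : a ≠ b) (c : ℤ)
    (hA : A a + 2 ≤ A b + c)
    (hi : (A + Evec d i) a + 2 ≤ (A + Evec d i) b + c)
    (hj : (A + Evec d j) a + 2 ≤ (A + Evec d j) b + c) :
    (A + Evec d i + Evec d j) a + 2 ≤ (A + Evec d i + Evec d j) b + c := by
  simp only [Pi.add_apply, Evec] at *
  by_cases hai : a = i <;> by_cases haj : a = j <;>
    by_cases hbi : b = i <;> by_cases hbj : b = j <;>
    simp_all <;> omega

/-- If `A`, `A+E_i`, `A+E_j` are vertices and `i ≠ j`, then `A+E_i+E_j` is a vertex. -/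
lemma dset_switch {m d : ℕ} {A : Fin (d+1) → ℤ} {i j : Fin (d+1)}
    (hA : Dset m d A) (hi : Dset m d (A + Evec d i)) (hj : Dset m d (A + Evec d j))
    (hij : i ≠ j) : Dset m d (A + Evec d i + Evec d j) := by
  have hd : d ≠ 0 := by
    rintro rfl
    exact hij (Fin.ext (by omega))
  have hlast : (Fin.last d) ≠ (0 : Fin (d+1)) := fun h => hd (by simpa [Fin.ext_iff] using h)
  constructor
  · intro k
    have h1 := hA.1 k
    have h2 := hi.1 k
    have h3 := hj.1 k
    have := gap_aux (A := A) hij (Fin.castSucc_lt_succ : k.castSucc < k.succ).ne 0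
      (by omega) (by omega) (by omega)
    omega
  · exact gap_aux hij hlast (m : ℤ) hA.2 hi.2 hj.2

/-- Coordinates weakly increase along any path. -/
lemma path_mono {m d : ℕ} {X Y : Fin (d+1) → ℤ}
    (h : Relation.ReflTransGen (TArrow m d) X Y) : ∀ i, X i ≤ Y i := by
  induction h with
  | refl => exact fun i => le_refl _
  | tail _ hstep ih =>
      obtain ⟨_, _, k, rfl⟩ := hstep
      intro i
      have := ih i
      simp only [Pi.add_apply, Evec]
      split <;> omega

/-- Bubbling lemma: if there is a path from `Y` to `B`, `Y+E_i` is a vertex, and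
`Y i < B i`, then there is a path from `Y+E_i` to `B`. -/
lemma bubble {m d : ℕ} {Y B : Fin (d+1) → ℤ} {i : Fin (d+1)}
    (h : Relation.ReflTransGen (TArrow m d) Y B) :
    Dset m d (Y + Evec d i) → Y i < B i →
    Relation.ReflTransGen (TArrow m d) (Y + Evec d i) B := by
  induction h using Relation.ReflTransGen.head_induction_on with
  | refl => exact fun _ h => absurd h (lt_irrefl _)
  | head h' hZB ih =>
      rename_i Y' Z
      intro hi hlt
      obtain ⟨hY, hZ, k, rfl⟩ := h'
      by_cases hk : k = i
      · subst hk; exact hZB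
      · have hki : (Y' + Evec d k) i = Y' i := by simp [Evec, Ne.symm hk]
        have hsd : Dset m d (Y' + Evec d k + Evec d i) := dset_switch hY hZ hi hk
        have p2 := ih hsd (by rw [hki]; exact hlt)
        exact Relation.ReflTransGen.head ⟨hi, hsd, k, (add_right_comm _ _ _).symm⟩ p2

/-- Key lemma: if `A ∈ P` has a P-path to `B`, and `A+E_i` is a vertex having a
path to `B` in the big quiver, then `A+E_i ∈ P` and it has a P-path to `B`. -/
lemma key {m d : ℕ} {P : Set (Fin (d+1) → ℤ)} (hsw : SwitchClosed m d P)
    {B : Fin (d+1) → ℤ}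
    {A : Fin (d+1) → ℤ}
    (hpath : Relation.ReflTransGen
      (fun X Y => X ∈ P ∧ Y ∈ P ∧ TArrow m d X Y) A B) :
    A ∈ P → ∀ i : Fin (d+1), Dset m d (A + Evec d i) →
      Relation.ReflTransGen (TArrow m d) (A + Evec d i) B →
      (A + Evec d i ∈ P ∧ Relation.ReflTransGen
        (fun X Y => X ∈ P ∧ Y ∈ P ∧ TArrow m d X Y) (A + Evec d i) B) := by
  induction hpath using Relation.ReflTransGen.head_induction_on with
  | refl =>
      intro _ i _ hbig
      exfalso
      have h1 := path_mono hbig i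
      simp only [Pi.add_apply] at h1
      rw [evec_self] at h1
      omega
  | head h' hCB ih =>
      rename_i A' C
      intro hA i hDi hbig
      obtain ⟨-, hC, hdA, hdC, j, rfl⟩ := h'
      by_cases hij : i = j
      · subst hij; exact ⟨hC, hCB⟩
      · -- big-quiver path from A'+E_j+E_i to B
        have hswd : Dset m d (A' + Evec d j + Evec d i) :=
          dset_switch hdA hdC hDi (Ne.symm hij)
        have hji : (A' + Evec d j) i = A' i := by simp [Evec, hij]
        have hBi : A' i < B i := by
          have h1 := path_mono hbig i
          simp only [Pi.add_apply] at h1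
          rw [evec_self] at h1
          omega
        have hbigC : Relation.ReflTransGen (TArrow m d) (A' + Evec d j) B :=
          Relation.ReflTransGen.mono (r := fun X Y => X ∈ P ∧ Y ∈ P ∧ TArrow m d X Y) (p := TArrow m d) (fun _ _ h => h.2.2) _ _ hCB
        have hbig2 := bubble hbigC hswd (by rw [hji]; exact hBi)
        obtain ⟨hP2, hp2⟩ := ih hC i hswd hbig2
        have hPAi : A' + Evec d i ∈ P := hsw A' j i hA hC hP2 hDi
        refine ⟨hPAi, Relation.ReflTransGen.head
          ⟨hPAi, hP2, hDi, hswd, j, (add_right_comm _ _ _).symm⟩ hp2⟩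

/-- If P is a switching-closed full subquiver of Q̃^{(d,n)} and there
is a directed path from A to B in P, then every directed path from A to B in
Q̃^{(d,n)} lies entirely in P (i.e. every vertex X on such a path lies in P). -/
theorem all_paths_in_switching_closed (n d : ℕ) (P : Set (Fin (d+1) → ℤ))
    (hP : ∀ X ∈ P, Dset (n + 2*d + 1) d X)
    (hsw : SwitchClosed (n + 2*d + 1) d P)
    (A B : Fin (d+1) → ℤ) (hA : A ∈ P) (hB : B ∈ P)
    (hpath : Relation.ReflTransGen
      (fun X Y => X ∈ P ∧ Y ∈ P ∧ TArrow (n + 2*d + 1) d X Y) A B) :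
    ∀ X, Relation.ReflTransGen (TArrow (n + 2*d + 1) d) A X →
      Relation.ReflTransGen (TArrow (n + 2*d + 1) d) X B → X ∈ P := by
  have aux : ∀ X, Relation.ReflTransGen (TArrow (n + 2*d + 1) d) A X →
      (Relation.ReflTransGen (TArrow (n + 2*d + 1) d) X B →
        X ∈ P ∧ Relation.ReflTransGen
          (fun X Y => X ∈ P ∧ Y ∈ P ∧ TArrow (n + 2*d + 1) d X Y) X B) := by
    intro X hAX
    induction hAX with
    | refl => exact fun _ => ⟨hA, hpath⟩
    | tail h1 hstep ih =>
        rename_i X' X''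
        intro hXB
        obtain ⟨hdb, hdc, i, rfl⟩ := hstep
        have harr : TArrow (n + 2*d + 1) d X' (X' + Evec d i) := ⟨hdb, hdc, i, rfl⟩
        have hbB := Relation.ReflTransGen.head harr hXB
        obtain ⟨hbP, hbp⟩ := ih hbB
        exact key hsw hbp hbP i hdc hXB
  exact fun X h1 h2 => (aux X h1 h2).1
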